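/- arXiv:2107.11216 — 5 statements merged into one kernel-verified Lean document; each statement's English description precedes it below -/
import Mathlib

section
/- Let v be a vertex of a finite simple graph G, and let G_v+u be the graph obtained from G by adding one new vertex u adjacent only to v. Then v belongs to no minimum vertex cover of G if and only if τ(G_v+u) = τ(G) + 1. -/
open SimpleGraph

/-- `S` is a dominating set of `G`. -/
def IsDomSet {V : Type*} (G : SimpleGraph V) (S : Finset V) : Prop :=
  ∀ v : V, v ∈ S ∨ ∃ u ∈ S, G.Adj u v

/-- The domination number `γ(G)`. -/
noncomputable def domNum {V : Type*} (G : SimpleGraph V) : ℕ :=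
  sInf {n | ∃ S : Finset V, IsDomSet G S ∧ S.card = n}

/-- `C` is a vertex cover of `G`. -/
def IsVC {V : Type*} (G : SimpleGraph V) (C : Finset V) : Prop :=
  ∀ e ∈ G.edgeSet, ∃ x ∈ C, x ∈ e

/-- The vertex cover number `τ(G)`. -/
noncomputable def tau {V : Type*} (G : SimpleGraph V) : ℕ :=
  sInf {n | ∃ C : Finset V, IsVC G C ∧ C.card = n}

/-- `S` is an independent set of `G`. -/
def IsIndep {V : Type*} (G : SimpleGraph V) (S : Finset V) : Prop :=
  ∀ a ∈ S, ∀ b ∈ S, ¬ G.Adj a b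

/-- The independence number `α(G)`. -/
noncomputable def indepNum {V : Type*} (G : SimpleGraph V) : ℕ :=
  sSup {n | ∃ S : Finset V, IsIndep G S ∧ S.card = n}

/-- The bondage number `b(G)`. -/
noncomputable def bondage {V : Type*} (G : SimpleGraph V) : ℕ :=
  sInf {n | ∃ E' : Finset (Sym2 V), ↑E' ⊆ G.edgeSet ∧ E'.card = n ∧
    domNum (G.deleteEdges ↑E') = domNum G + 1}

/-- The graph `G_v+u` obtained from `G` by adding one new vertex (`none`) adjacent only to `v`. -/
def addLeaf {V : Type*} (G : SimpleGraph V) (v : V) : SimpleGraph (Option V) :=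
  SimpleGraph.fromRel (fun x y =>
    (∃ a b, x = some a ∧ y = some b ∧ G.Adj a b) ∨ (x = some v ∧ y = none))

/-- The graph `G_A+` obtained from `G` by adding, for each `v ∈ A`, one new pendant
vertex adjacent only to `v`. -/
def addLeaves {V : Type*} (G : SimpleGraph V) (A : Finset V) :
    SimpleGraph (V ⊕ {x // x ∈ A}) :=
  SimpleGraph.fromRel (fun x y =>
    (∃ a b, x = Sum.inl a ∧ y = Sum.inl b ∧ G.Adj a b) ∨
    (∃ a : {x // x ∈ A}, x = Sum.inl a.1 ∧ y = Sum.inr a))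

/-- The `3`-subdivision of the edge `uv` of `G`: the edge `uv` is deleted, three new
vertices `u' = Sum.inr 0`, `w = Sum.inr 1`, `v' = Sum.inr 2` are added, together with the
four edges `u u'`, `u' w`, `w v'`, `v' v`. -/
def subdiv3 {V : Type*} (G : SimpleGraph V) (u v : V) : SimpleGraph (V ⊕ Fin 3) :=
  SimpleGraph.fromRel (fun x y =>
    match x, y with
    | Sum.inl a, Sum.inl b => G.Adj a b ∧ s(a, b) ≠ s(u, v)
    | Sum.inl a, Sum.inr i => (a = u ∧ i = 0) ∨ (a = v ∧ i = 2)
    | Sum.inr i, Sum.inr j => (i = 0 ∧ j = 1) ∨ (i = 1 ∧ j = 2)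
    | _, _ => False)

lemma isVC_univ {V : Type*} [Fintype V] (G : SimpleGraph V) : IsVC G Finset.univ := by
  intro e he
  induction e using Sym2.ind with
  | _ x y => exact ⟨x, Finset.mem_univ x, Sym2.mem_mk_left x y⟩

lemma tau_le_card {V : Type*} (G : SimpleGraph V) (C : Finset V) (h : IsVC G C) :
    tau G ≤ C.card := Nat.sInf_le ⟨C, h, rfl⟩

lemma exists_min_vc {V : Type*} [Fintype V] (G : SimpleGraph V) :
    ∃ C : Finset V, IsVC G C ∧ C.card = tau G := by
  have h := Nat.sInf_mem (s := {n | ∃ C : Finset V, IsVC G C ∧ C.card = n})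
    ⟨Finset.univ.card, Finset.univ, isVC_univ G, rfl⟩
  exact h

lemma isVC_mono {V : Type*} (G : SimpleGraph V) {C C' : Finset V} (hCC : C ⊆ C')
    (h : IsVC G C) : IsVC G C' := fun e he => by
  obtain ⟨x, hx, hxe⟩ := h e he
  exact ⟨x, hCC hx, hxe⟩

lemma addLeaf_adj_some {V : Type*} {G : SimpleGraph V} {v a b : V} (h : G.Adj a b) :
    (addLeaf G v).Adj (some a) (some b) :=
  ⟨by simpa using h.ne, Or.inl (Or.inl ⟨a, b, rfl, rfl, h⟩)⟩

lemma addLeaf_adj_none {V : Type*} (G : SimpleGraph V) (v : V) :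
    (addLeaf G v).Adj (some v) none :=
  ⟨by simp, Or.inl (Or.inr ⟨rfl, rfl⟩)⟩

/-- cover of `addLeaf` restricted to the `some` part covers `G`. -/
lemma addLeaf_cover_restrict {V : Type*} [Fintype V] [DecidableEq V] {G : SimpleGraph V}
    {v : V} {C' : Finset (Option V)} (h : IsVC (addLeaf G v) C') :
    IsVC G (Finset.univ.filter (fun a => some a ∈ C')) := by
  intro e he
  induction e using Sym2.ind with
  | _ a b =>
    rw [SimpleGraph.mem_edgeSet] at he
    obtain ⟨x, hx, hxe⟩ := h s(some a, some b)
      (((addLeaf G v).mem_edgeSet).mpr (addLeaf_adj_some he))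
    rw [Sym2.mem_iff] at hxe
    rcases hxe with rfl | rfl
    · exact ⟨a, Finset.mem_filter.mpr ⟨Finset.mem_univ a, hx⟩, Sym2.mem_mk_left a b⟩
    · exact ⟨b, Finset.mem_filter.mpr ⟨Finset.mem_univ b, hx⟩, Sym2.mem_mk_right a b⟩

/-- `v` belongs to no minimum vertex cover of `G` iff `τ(G_v+u) = τ(G) + 1`. -/
theorem stmt2 {V : Type*} [Fintype V] [DecidableEq V] (G : SimpleGraph V) (v : V) :
    (∀ C : Finset V, IsVC G C → C.card = tau G → v ∉ C) ↔
      tau (addLeaf G v) = tau G + 1 := by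
  constructor
  · intro h
    -- upper bound : τ' ≤ τ + 1
    obtain ⟨C, hC, hCcard⟩ := exists_min_vc G
    have hup : tau (addLeaf G v) ≤ tau G + 1 := by
      have hcov : IsVC (addLeaf G v) (insert none (C.image some)) := by
        intro e he
        induction e using Sym2.ind with
        | _ x y =>
          rw [SimpleGraph.mem_edgeSet] at he
          obtain ⟨hne, hrel | hrel⟩ := he
          all_goals {
            rcases hrel with ⟨a, b, hx, hy, hab⟩ | ⟨hx, hy⟩
            · subst hx; subst hy
              obtain ⟨z, hz, hze⟩ := hC s(a, b) ((G.mem_edgeSet).mpr hab)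
              rw [Sym2.mem_iff] at hze
              rcases hze with rfl | rfl <;>
                first
                  | exact ⟨some z, Finset.mem_insert_of_mem (Finset.mem_image_of_mem _ hz),
                      Sym2.mem_mk_left _ _⟩
                  | exact ⟨some z, Finset.mem_insert_of_mem (Finset.mem_image_of_mem _ hz),
                      Sym2.mem_mk_right _ _⟩
            · subst hx; subst hy
              first
                | exact ⟨none, Finset.mem_insert_self _ _, Sym2.mem_mk_right _ _⟩
                | exact ⟨none, Finset.mem_insert_self _ _, Sym2.mem_mk_left _ _⟩ }
      have hcard : (insert none (C.image some)).card = tau G + 1 := by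
        rw [Finset.card_insert_of_notMem (by simp), Finset.card_image_of_injective _
          (Option.some_injective V), hCcard]
      calc tau (addLeaf G v) ≤ (insert none (C.image some)).card :=
            tau_le_card _ _ hcov
        _ = tau G + 1 := hcard
    -- lower bound : τ + 1 ≤ τ'
    have hlow : tau G + 1 ≤ tau (addLeaf G v) := by
      by_contra hcon
      push_neg at hcon
      have hle : tau (addLeaf G v) ≤ tau G := Nat.lt_succ_iff.mp hcon
      obtain ⟨C', hC', hC'card⟩ := exists_min_vc (addLeaf G v)
      set D := Finset.univ.filter (fun a => some a ∈ C') with hD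
      have hDcov : IsVC G D := addLeaf_cover_restrict hC'
      have hDsub : D.image some ⊆ C' := by
        intro x hx
        obtain ⟨a, ha, rfl⟩ := Finset.mem_image.mp hx
        exact (Finset.mem_filter.mp ha).2
      have hDcard : D.card ≤ C'.card := by
        calc D.card = (D.image some).card :=
              (Finset.card_image_of_injective _ (Option.some_injective V)).symm
          _ ≤ C'.card := Finset.card_le_card hDsub
      by_cases hv : some v ∈ C'
      · have hvD : v ∈ D := Finset.mem_filter.mpr ⟨Finset.mem_univ v, hv⟩
        have : D.card = tau G := le_antisymm (hDcard.trans (hC'card ▸ hle))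
          (tau_le_card _ _ hDcov)
        exact h D hDcov this hvD
      · -- none must be in C' to cover the pendant edge
        have hnone : none ∈ C' := by
          obtain ⟨x, hx, hxe⟩ := hC' s(some v, none)
            (((addLeaf G v).mem_edgeSet).mpr (addLeaf_adj_none G v))
          rw [Sym2.mem_iff] at hxe
          rcases hxe with rfl | rfl
          · exact absurd hx hv
          · exact hx
        have hsub2 : insert none (D.image some) ⊆ C' :=
          Finset.insert_subset hnone hDsub
        have hcard2 : D.card + 1 ≤ C'.card := by
          have : (insert none (D.image some)).card ≤ C'.card := Finset.card_le_card hsub2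
          rwa [Finset.card_insert_of_notMem (by simp), Finset.card_image_of_injective _
            (Option.some_injective V)] at this
        have hvD : v ∉ D := fun hvD => hv (Finset.mem_filter.mp hvD).2
        have hcovI : IsVC G (insert v D) := isVC_mono G (Finset.subset_insert v D) hDcov
        have hcardI : (insert v D).card = tau G := by
          have h1 : (insert v D).card = D.card + 1 := Finset.card_insert_of_notMem hvD
          have h2 : (insert v D).card ≤ tau G := by
            rw [h1]; exact hcard2.trans (hC'card ▸ hle)
          exact le_antisymm h2 (tau_le_card _ _ hcovI)
        exact h _ hcovI hcardI (Finset.mem_insert_self v D)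
    exact le_antisymm hup hlow
  · intro hτ C hC hCcard hvC
    have hcov : IsVC (addLeaf G v) (C.image some) := by
      intro e he
      induction e using Sym2.ind with
      | _ x y =>
        rw [SimpleGraph.mem_edgeSet] at he
        obtain ⟨hne, hrel | hrel⟩ := he
        all_goals {
          rcases hrel with ⟨a, b, hx, hy, hab⟩ | ⟨hx, hy⟩
          · subst hx; subst hy
            obtain ⟨z, hz, hze⟩ := hC s(a, b) ((G.mem_edgeSet).mpr hab)
            rw [Sym2.mem_iff] at hze
            rcases hze with rfl | rfl <;>
              first
                | exact ⟨some z, Finset.mem_image_of_mem _ hz, Sym2.mem_mk_left _ _⟩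
                | exact ⟨some z, Finset.mem_image_of_mem _ hz, Sym2.mem_mk_right _ _⟩
          · subst hx; subst hy
            first
              | exact ⟨some v, Finset.mem_image_of_mem _ hvC, Sym2.mem_mk_right _ _⟩
              | exact ⟨some v, Finset.mem_image_of_mem _ hvC, Sym2.mem_mk_left _ _⟩ }
    have : tau (addLeaf G v) ≤ tau G := by
      calc tau (addLeaf G v) ≤ (C.image some).card := tau_le_card _ _ hcov
        _ = tau G := by rw [Finset.card_image_of_injective _ (Option.some_injective V), hCcard]
    omega
end

section
/- Let G be a finite simple graph and let A ⊆ V(G). There exists a minimum dominating set S of G with A ⊆ S if and only if γ(G_A+) = γ(G), where G_A+ is the graph obtained from G by adding, for each vertex v ∈ A, one new vertex adjacent only to v. -/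
open SimpleGraph

section Aux
variable {V : Type*} [Fintype V] [DecidableEq V] (G : SimpleGraph V) (A : Finset V)

lemma addLeaves_adj_inl_inl {a b : V} :
    (addLeaves G A).Adj (Sum.inl a) (Sum.inl b) ↔ G.Adj a b := by
  simp only [addLeaves, SimpleGraph.fromRel_adj]
  constructor
  · rintro ⟨hne, h | h⟩
    · rcases h with ⟨x, y, hx, hy, hxy⟩ | ⟨x, hx, hy⟩
      · cases hx; cases hy; exact hxy
      · exact absurd hy (by simp)
    · rcases h with ⟨x, y, hx, hy, hxy⟩ | ⟨x, hx, hy⟩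
      · cases hx; cases hy; exact hxy.symm
      · exact absurd hy (by simp)
  · intro h
    exact ⟨by simpa using h.ne, Or.inl (Or.inl ⟨a, b, rfl, rfl, h⟩)⟩

lemma addLeaves_adj_inl_inr (a : {x // x ∈ A}) :
    (addLeaves G A).Adj (Sum.inl a.1) (Sum.inr a) := by
  simp only [addLeaves, SimpleGraph.fromRel_adj]
  exact ⟨by simp, Or.inl (Or.inr ⟨a, rfl, rfl⟩)⟩

lemma addLeaves_adj_inr {a : {x // x ∈ A}} {y : V ⊕ {x // x ∈ A}}
    (h : (addLeaves G A).Adj y (Sum.inr a)) : y = Sum.inl a.1 := by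
  simp only [addLeaves, SimpleGraph.fromRel_adj] at h
  rcases h with ⟨hne, h | h⟩
  · rcases h with ⟨x, b, hx, hy, hxy⟩ | ⟨b, hx, hy⟩
    · exact absurd hy (by simp)
    · cases hy; exact hx
  · rcases h with ⟨x, b, hx, hy, hxy⟩ | ⟨b, hx, hy⟩
    · exact absurd hx (by simp)
    · exact absurd hx (by simp)

/-- Projection map from `V ⊕ A` to `V`. -/
def projA : V ⊕ {x // x ∈ A} → V := Sum.elim id Subtype.val

lemma isDomSet_proj {T : Finset (V ⊕ {x // x ∈ A})}
    (hT : IsDomSet (addLeaves G A) T) : IsDomSet G (T.image (projA A)) := by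
  intro v
  rcases hT (Sum.inl v) with h | ⟨u, hu, hadj⟩
  · exact Or.inl (Finset.mem_image.2 ⟨Sum.inl v, h, rfl⟩)
  · cases u with
    | inl w =>
        exact Or.inr ⟨w, Finset.mem_image.2 ⟨Sum.inl w, hu, rfl⟩,
          (addLeaves_adj_inl_inl G A).1 hadj⟩
    | inr b =>
        have : Sum.inl v = Sum.inl b.1 := addLeaves_adj_inr G A hadj.symm
        have hv : v = b.1 := by injection this
        exact Or.inl (Finset.mem_image.2 ⟨Sum.inr b, hu, hv.symm⟩)

lemma domNum_le_of_isDomSet {W : Type*} (H : SimpleGraph W) {S : Finset W}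
    (hS : IsDomSet H S) : domNum H ≤ S.card :=
  Nat.sInf_le ⟨S, hS, rfl⟩

lemma exists_min_domSet {W : Type*} [Fintype W] (H : SimpleGraph W) :
    ∃ S : Finset W, IsDomSet H S ∧ S.card = domNum H := by
  have hne : {n | ∃ S : Finset W, IsDomSet H S ∧ S.card = n}.Nonempty :=
    ⟨(Finset.univ : Finset W).card, Finset.univ, fun v => Or.inl (Finset.mem_univ v), rfl⟩
  exact Nat.sInf_mem hne

lemma domNum_le_addLeaves : domNum G ≤ domNum (addLeaves G A) := by
  obtain ⟨T, hT, hcard⟩ := exists_min_domSet (addLeaves G A)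
  calc domNum G ≤ (T.image (projA A)).card :=
        domNum_le_of_isDomSet G (isDomSet_proj G A hT)
    _ ≤ T.card := Finset.card_image_le
    _ = domNum (addLeaves G A) := hcard

end Aux

/-- There is a minimum dominating set of `G` containing `A` iff `γ(G_A+) = γ(G)`. -/
theorem stmt3 {V : Type*} [Fintype V] [DecidableEq V] (G : SimpleGraph V) (A : Finset V) :
    (∃ S : Finset V, IsDomSet G S ∧ S.card = domNum G ∧ A ⊆ S) ↔
      domNum (addLeaves G A) = domNum G := by
  constructor
  · rintro ⟨S, hS, hcard, hAS⟩
    refine le_antisymm ?_ (domNum_le_addLeaves G A)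
    have hdom : IsDomSet (addLeaves G A) (S.image Sum.inl) := by
      intro x
      cases x with
      | inl v =>
          rcases hS v with h | ⟨u, hu, hadj⟩
          · exact Or.inl (Finset.mem_image.2 ⟨v, h, rfl⟩)
          · exact Or.inr ⟨Sum.inl u, Finset.mem_image.2 ⟨u, hu, rfl⟩,
              (addLeaves_adj_inl_inl G A).2 hadj⟩
      | inr a =>
          exact Or.inr ⟨Sum.inl a.1, Finset.mem_image.2 ⟨a.1, hAS a.2, rfl⟩,
            addLeaves_adj_inl_inr G A a⟩
    calc domNum (addLeaves G A) ≤ (S.image Sum.inl).card :=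
          domNum_le_of_isDomSet _ hdom
      _ = S.card := Finset.card_image_of_injective _ Sum.inl_injective
      _ = domNum G := hcard
  · intro h
    obtain ⟨T, hT, hcard⟩ := exists_min_domSet (addLeaves G A)
    refine ⟨T.image (projA A), isDomSet_proj G A hT, ?_, ?_⟩
    · refine le_antisymm ?_ (domNum_le_of_isDomSet G (isDomSet_proj G A hT))
      calc (T.image (projA A)).card ≤ T.card := Finset.card_image_le
        _ = domNum G := by rw [hcard, h]
    · intro a ha
      rcases hT (Sum.inr ⟨a, ha⟩) with hmem | ⟨u, hu, hadj⟩
      · exact Finset.mem_image.2 ⟨Sum.inr ⟨a, ha⟩, hmem, rfl⟩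
      · have := addLeaves_adj_inr G A hadj
        subst this
        exact Finset.mem_image.2 ⟨Sum.inl a, hu, rfl⟩
end

section
/- Let G be a finite simple graph containing an edge uv with deg(u) + deg(v) ≤ 4, and let E′ be the set of all edges of G incident with u or with v. Then |E′| ≤ 3 and γ(G − E′) > γ(G). -/
open SimpleGraph

/-- If `uv` is an edge with `deg(u) + deg(v) ≤ 4` and `E'` is the set of edges incident
with `u` or `v`, then `|E'| ≤ 3` and `γ(G − E') > γ(G)`. -/
theorem stmt4 {V : Type*} [Fintype V] [DecidableEq V] (G : SimpleGraph V)
    [DecidableRel G.Adj] (u v : V) (huv : G.Adj u v)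
    (hdeg : G.degree u + G.degree v ≤ 4) :
    (G.edgeFinset.filter (fun e => u ∈ e ∨ v ∈ e)).card ≤ 3 ∧
    domNum G < domNum (G.deleteEdges ↑(G.edgeFinset.filter (fun e => u ∈ e ∨ v ∈ e))) := by
  classical
  set E' := G.edgeFinset.filter (fun e => u ∈ e ∨ v ∈ e) with hE'
  set G' := G.deleteEdges ↑E' with hG'
  have hne : u ≠ v := huv.ne
  -- cardinality bound
  have hfilter : E' = G.incidenceFinset u ∪ G.incidenceFinset v := by
    ext e
    simp [hE', SimpleGraph.mem_incidenceFinset, SimpleGraph.mem_incidenceSet,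
      Finset.mem_filter, SimpleGraph.mem_edgeFinset, SimpleGraph.incidenceSet,
      Finset.mem_union, and_or_left]
  have hcard : E'.card ≤ 3 := by
    have h1 : (G.incidenceFinset u).card = G.degree u :=
      G.card_incidenceFinset_eq_degree u
    have h2 : (G.incidenceFinset v).card = G.degree v :=
      G.card_incidenceFinset_eq_degree v
    have hmem : s(u, v) ∈ G.incidenceFinset u ∩ G.incidenceFinset v := by
      rw [Finset.mem_inter, SimpleGraph.mem_incidenceFinset, SimpleGraph.mem_incidenceFinset]
      exact ⟨G.mk'_mem_incidenceSet_left_iff.2 huv, G.mk'_mem_incidenceSet_right_iff.2 huv⟩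
    have hinter : 1 ≤ (G.incidenceFinset u ∩ G.incidenceFinset v).card :=
      Finset.card_pos.mpr ⟨_, hmem⟩
    have := Finset.card_union_add_card_inter (G.incidenceFinset u) (G.incidenceFinset v)
    rw [hfilter]
    omega
  refine ⟨hcard, ?_⟩
  -- isolated vertices
  have hiso : ∀ w x : V, (x = u ∨ x = v) → ¬ G'.Adj x w := by
    rintro w x hx hadj
    rw [hG', SimpleGraph.deleteEdges_adj] at hadj
    refine hadj.2 ?_
    simp only [Finset.coe_filter, SimpleGraph.mem_edgeFinset, Set.mem_setOf_eq, hE']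
    refine ⟨hadj.1, ?_⟩
    rcases hx with rfl | rfl
    · left; exact Sym2.mem_mk_left _ _
    · right; exact Sym2.mem_mk_left _ _
  -- a minimum dominating set of G'
  have hnonempty : {n | ∃ S : Finset V, IsDomSet G' S ∧ S.card = n}.Nonempty :=
    ⟨(Finset.univ : Finset V).card, Finset.univ, fun w => Or.inl (Finset.mem_univ w), rfl⟩
  obtain ⟨D, hD, hDcard⟩ := Nat.sInf_mem hnonempty
  have huD : u ∈ D := by
    rcases hD u with h | ⟨d, hd, hadj⟩
    · exact h
    · exact absurd hadj.symm (hiso d u (Or.inl rfl))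
  have hvD : v ∈ D := by
    rcases hD v with h | ⟨d, hd, hadj⟩
    · exact h
    · exact absurd hadj.symm (hiso d v (Or.inr rfl))
  have hdom : IsDomSet G (D.erase v) := by
    intro w
    rcases hD w with h | ⟨d, hd, hadj⟩
    · by_cases hw : w = v
      · subst hw
        exact Or.inr ⟨u, Finset.mem_erase.mpr ⟨hne, huD⟩, huv⟩
      · exact Or.inl (Finset.mem_erase.mpr ⟨hw, h⟩)
    · have hdv : d ≠ v := by
        exact fun h => hiso w v (Or.inr rfl) (h ▸ hadj)
      exact Or.inr ⟨d, Finset.mem_erase.mpr ⟨hdv, hd⟩,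
        (SimpleGraph.deleteEdges_le _ hadj)⟩
  have hle : domNum G ≤ (D.erase v).card :=
    Nat.sInf_le ⟨D.erase v, hdom, rfl⟩
  have hcarderase : (D.erase v).card < D.card :=
    Finset.card_erase_lt_of_mem hvD
  have : domNum G' = D.card := hDcard.symm
  omega
end

section
/- Let G be a finite simple graph containing two distinct vertices u and v with deg(v) = 1 and deg(u) ≤ 2, and suppose u and v have a common neighbor w. Let E′ consist of all edges of G incident with u together with the edge vw. Then |E′| ≤ 3 and γ(G − E′) > γ(G). -/
open SimpleGraph

/-- If `deg(v) = 1`, `deg(u) ≤ 2`, `u ≠ v`, and `w` is a common neighbor of `u` and `v`,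
and `E'` consists of all edges incident with `u` together with the edge `vw`, then
`|E'| ≤ 3` and `γ(G − E') > γ(G)`. -/
theorem stmt5 {V : Type*} [Fintype V] [DecidableEq V] (G : SimpleGraph V)
    [DecidableRel G.Adj] (u v w : V) (huv : u ≠ v)
    (hdv : G.degree v = 1) (hdu : G.degree u ≤ 2)
    (huw : G.Adj u w) (hvw : G.Adj v w) :
    (insert s(v, w) (G.edgeFinset.filter (fun e => u ∈ e))).card ≤ 3 ∧
    domNum G <
      domNum (G.deleteEdges ↑(insert s(v, w) (G.edgeFinset.filter (fun e => u ∈ e)))) :=  by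
  classical
  set E' := insert s(v, w) (G.edgeFinset.filter (fun e => u ∈ e)) with hE'
  set G' := G.deleteEdges ↑E' with hG'
  -- v's only neighbor is w
  have hNv : G.neighborFinset v = {w} := by
    have hw : w ∈ G.neighborFinset v := (SimpleGraph.mem_neighborFinset _ _ _).mpr hvw
    have hcard : (G.neighborFinset v).card = 1 := hdv
    obtain ⟨a, ha⟩ := Finset.card_eq_one.mp hcard
    rw [ha] at hw ⊢
    rw [Finset.mem_singleton] at hw
    rw [hw]
  have hvonly : ∀ x, G.Adj v x → x = w := by
    intro x hx
    have : x ∈ G.neighborFinset v := (SimpleGraph.mem_neighborFinset _ _ _).mpr hx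
    rw [hNv, Finset.mem_singleton] at this
    exact this
  -- u is isolated in G'
  have hu_iso : ∀ x, ¬ G'.Adj u x := by
    intro x hx
    rw [hG', SimpleGraph.deleteEdges_adj] at hx
    exact hx.2 (by
      apply Finset.mem_insert_of_mem
      simp only [Finset.mem_filter, SimpleGraph.mem_edgeFinset, SimpleGraph.mem_edgeSet]
      exact ⟨hx.1, Sym2.mem_mk_left u x⟩)
  -- v is isolated in G'
  have hv_iso : ∀ x, ¬ G'.Adj v x := by
    intro x hx
    rw [hG', SimpleGraph.deleteEdges_adj] at hx
    have hxw := hvonly x hx.1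
    subst hxw
    exact hx.2 (Finset.mem_insert_self _ _)
  have hle : ∀ a b, G'.Adj a b → G.Adj a b := by
    intro a b h
    rw [hG', SimpleGraph.deleteEdges_adj] at h
    exact h.1
  constructor
  · calc E'.card ≤ (G.edgeFinset.filter (fun e => u ∈ e)).card + 1 :=
          Finset.card_insert_le _ _
      _ = G.degree u + 1 := by
          rw [← SimpleGraph.card_incidenceFinset_eq_degree,
            SimpleGraph.incidenceFinset_eq_filter]
      _ ≤ 3 := by omega
  · -- get a minimum dominating set of G'
    have hne : {n | ∃ S : Finset V, IsDomSet G' S ∧ S.card = n}.Nonempty := by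
      refine ⟨(Finset.univ : Finset V).card, Finset.univ, ?_, rfl⟩
      intro x
      exact Or.inl (Finset.mem_univ x)
    obtain ⟨S', hS'dom, hS'card⟩ := Nat.sInf_mem hne
    have huS : u ∈ S' := by
      rcases hS'dom u with h | ⟨s, _, hs⟩
      · exact h
      · exact absurd hs.symm (hu_iso s)
    have hvS : v ∈ S' := by
      rcases hS'dom v with h | ⟨s, _, hs⟩
      · exact h
      · exact absurd hs.symm (hv_iso s)
    set S : Finset V := insert w ((S'.erase u).erase v) with hS
    have hSdom : IsDomSet G S := by
      intro x
      rcases hS'dom x with h | ⟨s, hsS, hs⟩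
      · by_cases hxu : x = u
        · exact Or.inr ⟨w, Finset.mem_insert_self _ _, hxu ▸ huw.symm⟩
        by_cases hxv : x = v
        · exact Or.inr ⟨w, Finset.mem_insert_self _ _, hxv ▸ hvw.symm⟩
        exact Or.inl (Finset.mem_insert_of_mem
          (Finset.mem_erase.mpr ⟨hxv, Finset.mem_erase.mpr ⟨hxu, h⟩⟩))
      · have hsu : s ≠ u := by rintro rfl; exact hu_iso x hs
        have hsv : s ≠ v := by rintro rfl; exact hv_iso x hs
        exact Or.inr ⟨s, Finset.mem_insert_of_mem
          (Finset.mem_erase.mpr ⟨hsv, Finset.mem_erase.mpr ⟨hsu, hsS⟩⟩), hle _ _ hs⟩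
    have hcard2 : 2 ≤ S'.card := by
      have : ({u, v} : Finset V) ⊆ S' := by
        intro x hx
        rcases Finset.mem_insert.mp hx with rfl | hx
        · exact huS
        · exact (Finset.mem_singleton.mp hx) ▸ hvS
      have h2 : ({u, v} : Finset V).card = 2 := Finset.card_pair huv
      calc 2 = ({u, v} : Finset V).card := h2.symm
        _ ≤ S'.card := Finset.card_le_card this
    have hScard : S.card ≤ S'.card - 1 := by
      have h1 : v ∈ S'.erase u := Finset.mem_erase.mpr ⟨fun h => huv h.symm, hvS⟩
      have h2 : ((S'.erase u).erase v).card = S'.card - 1 - 1 := by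
        rw [Finset.card_erase_of_mem h1, Finset.card_erase_of_mem huS]
      calc S.card ≤ ((S'.erase u).erase v).card + 1 := Finset.card_insert_le _ _
        _ = S'.card - 1 - 1 + 1 := by rw [h2]
        _ ≤ S'.card - 1 := by omega
    have hdomle : domNum G ≤ S.card := Nat.sInf_le ⟨S, hSdom, rfl⟩
    have : domNum G' = S'.card := hS'card.symm
    omega
end

section
/- Let uv be an edge of a finite simple graph G, and let H be the 3-subdivision of the edge uv. Then γ(H) = γ(G) + 1. -/
open SimpleGraph

section Aux
open Finset

lemma domNum_le' {V : Type*} (G : SimpleGraph V) {S : Finset V} (h : IsDomSet G S) :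
    domNum G ≤ S.card := Nat.sInf_le ⟨S, h, rfl⟩

lemma domNum_exists' {V : Type*} [Fintype V] (G : SimpleGraph V) :
    ∃ S : Finset V, IsDomSet G S ∧ S.card = domNum G :=
  Nat.sInf_mem (⟨_, Finset.univ, fun x => Or.inl (Finset.mem_univ x), rfl⟩ :
    Set.Nonempty {n | ∃ S : Finset V, IsDomSet G S ∧ S.card = n})

variable {V : Type*} [DecidableEq V] {G : SimpleGraph V} {u v : V}

omit [DecidableEq V] in
lemma adj_ll {a b : V} :
    (subdiv3 G u v).Adj (Sum.inl a) (Sum.inl b) ↔ G.Adj a b ∧ s(a,b) ≠ s(u,v) := by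
  simp only [subdiv3, SimpleGraph.fromRel_adj]
  constructor
  · rintro ⟨_, h | h⟩
    · exact h
    · exact ⟨h.1.symm, by rw [Sym2.eq_swap]; exact h.2⟩
  · rintro ⟨h1, h2⟩
    exact ⟨by simpa using h1.ne, Or.inl ⟨h1, h2⟩⟩

omit [DecidableEq V] in
lemma adj_lr {a : V} {i : Fin 3} :
    (subdiv3 G u v).Adj (Sum.inl a) (Sum.inr i) ↔ (a = u ∧ i = 0) ∨ (a = v ∧ i = 2) := by
  simp [subdiv3, SimpleGraph.fromRel_adj]

omit [DecidableEq V] in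
lemma adj_rl {a : V} {i : Fin 3} :
    (subdiv3 G u v).Adj (Sum.inr i) (Sum.inl a) ↔ (a = u ∧ i = 0) ∨ (a = v ∧ i = 2) := by
  rw [SimpleGraph.adj_comm]; exact adj_lr

omit [DecidableEq V] in
lemma adj_rr {i j : Fin 3} :
    (subdiv3 G u v).Adj (Sum.inr i) (Sum.inr j) ↔
      (i = 0 ∧ j = 1) ∨ (i = 1 ∧ j = 2) ∨ (i = 1 ∧ j = 0) ∨ (i = 2 ∧ j = 1) := by
  fin_cases i <;> fin_cases j <;> simp [subdiv3, SimpleGraph.fromRel_adj]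

lemma upper_dom (S : Finset V) (hS : IsDomSet G S) (i : Fin 3)
    (hA : u ∈ S → v ∉ S → i = 2) (hB : v ∈ S → u ∉ S → i = 0)
    (hC : u ∉ S → i = 0 ∨ i = 1) (hD : v ∉ S → i = 2 ∨ i = 1) :
    IsDomSet (subdiv3 G u v) (insert (Sum.inr i) (S.image Sum.inl)) := by
  intro x
  rcases x with a | j
  · rcases hS a with ha | ⟨s, hs, hsa⟩
    · exact Or.inl (mem_insert_of_mem (mem_image_of_mem _ ha))
    · by_cases he : s(s,a) = s(u,v)
      · rw [Sym2.eq_iff] at he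
        rcases he with ⟨he1, he2⟩ | ⟨he1, he2⟩
        · by_cases hv : v ∈ S
          · exact Or.inl (mem_insert_of_mem (mem_image_of_mem _ (he2 ▸ hv)))
          · have hi := hA (he1 ▸ hs) hv
            subst hi
            exact Or.inr ⟨Sum.inr 2, mem_insert_self _ _, adj_rl.mpr (Or.inr ⟨he2, rfl⟩)⟩
        · by_cases hu : u ∈ S
          · exact Or.inl (mem_insert_of_mem (mem_image_of_mem _ (he2 ▸ hu)))
          · have hi := hB (he1 ▸ hs) hu
            subst hi
            exact Or.inr ⟨Sum.inr 0, mem_insert_self _ _, adj_rl.mpr (Or.inl ⟨he2, rfl⟩)⟩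
      · exact Or.inr ⟨Sum.inl s, mem_insert_of_mem (mem_image_of_mem _ hs), adj_ll.mpr ⟨hsa, he⟩⟩
  · fin_cases j
    · by_cases hu : u ∈ S
      · exact Or.inr ⟨Sum.inl u, mem_insert_of_mem (mem_image_of_mem _ hu),
          adj_lr.mpr (Or.inl ⟨rfl, rfl⟩)⟩
      · rcases hC hu with rfl | rfl
        · exact Or.inl (mem_insert_self _ _)
        · exact Or.inr ⟨Sum.inr 1, mem_insert_self _ _, adj_rr.mpr (by tauto)⟩
    · have h3 : i = 0 ∨ i = 1 ∨ i = 2 := by fin_cases i <;> simp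
      rcases h3 with rfl | rfl | rfl
      · exact Or.inr ⟨Sum.inr 0, mem_insert_self _ _, adj_rr.mpr (by tauto)⟩
      · exact Or.inl (mem_insert_self _ _)
      · exact Or.inr ⟨Sum.inr 2, mem_insert_self _ _, adj_rr.mpr (by tauto)⟩
    · by_cases hv : v ∈ S
      · exact Or.inr ⟨Sum.inl v, mem_insert_of_mem (mem_image_of_mem _ hv),
          adj_lr.mpr (Or.inr ⟨rfl, rfl⟩)⟩
      · rcases hD hv with rfl | rfl
        · exact Or.inl (mem_insert_self _ _)
        · exact Or.inr ⟨Sum.inr 1, mem_insert_self _ _, adj_rr.mpr (by tauto)⟩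

lemma lower_bound (huv : G.Adj u v) (T : Finset (V ⊕ Fin 3))
    (hT : IsDomSet (subdiv3 G u v) T) :
    ∃ S : Finset V, IsDomSet G S ∧ S.card + 1 ≤ T.card := by
  classical
  set A : Finset V := T.preimage Sum.inl Sum.inl_injective.injOn with hA
  set B : Finset (Fin 3) := T.preimage Sum.inr Sum.inr_injective.injOn with hB
  have hmemA : ∀ a : V, a ∈ A ↔ Sum.inl a ∈ T := fun a => Finset.mem_preimage
  have hmemB : ∀ j : Fin 3, j ∈ B ↔ Sum.inr j ∈ T := fun j => Finset.mem_preimage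
  have hsub : A.image Sum.inl ∪ B.image Sum.inr ⊆ T := by
    intro x hx
    rcases Finset.mem_union.mp hx with hx | hx
    · obtain ⟨a, ha, rfl⟩ := Finset.mem_image.mp hx
      exact (hmemA a).mp ha
    · obtain ⟨j, hj, rfl⟩ := Finset.mem_image.mp hx
      exact (hmemB j).mp hj
  have hdisj : Disjoint (A.image Sum.inl) (B.image Sum.inr) := by
    rw [Finset.disjoint_left]
    rintro x hx hx'
    obtain ⟨a, _, rfl⟩ := Finset.mem_image.mp hx
    obtain ⟨j, _, h⟩ := Finset.mem_image.mp hx'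
    exact Sum.inr_ne_inl h
  have hcard : A.card + B.card ≤ T.card := by
    calc A.card + B.card = (A.image Sum.inl).card + (B.image Sum.inr).card := by
          rw [Finset.card_image_of_injective _ Sum.inl_injective,
            Finset.card_image_of_injective _ Sum.inr_injective]
      _ = (A.image Sum.inl ∪ B.image Sum.inr).card :=
          (Finset.card_union_of_disjoint hdisj).symm
      _ ≤ T.card := Finset.card_le_card hsub
  have key : ∀ x : V, x ∈ A ∨ (∃ s ∈ A, G.Adj s x) ∨
      (∃ j ∈ B, (x = u ∧ j = 0) ∨ (x = v ∧ j = 2)) := by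
    intro x
    rcases hT (Sum.inl x) with h | ⟨t, ht, hadj⟩
    · exact Or.inl ((hmemA x).mpr h)
    · rcases t with s | j
      · exact Or.inr (Or.inl ⟨s, (hmemA s).mpr ht, (adj_ll.mp hadj).1⟩)
      · exact Or.inr (Or.inr ⟨j, (hmemB j).mpr ht, adj_rl.mp hadj⟩)
  have hBne : B.Nonempty := by
    rcases hT (Sum.inr 1) with h | ⟨t, ht, hadj⟩
    · exact ⟨1, (hmemB 1).mpr h⟩
    · rcases t with a | j
      · rw [adj_lr] at hadj
        rcases hadj with ⟨_, h⟩ | ⟨_, h⟩ <;> exact absurd h (by decide)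
      · exact ⟨j, (hmemB j).mpr ht⟩
  by_cases h2B : 2 ≤ B.card
  · refine ⟨insert u A, ?_, ?_⟩
    · intro x
      rcases key x with hx | ⟨s, hs, hsx⟩ | ⟨j, _, ⟨rfl, _⟩ | ⟨rfl, _⟩⟩
      · exact Or.inl (mem_insert_of_mem hx)
      · exact Or.inr ⟨s, mem_insert_of_mem hs, hsx⟩
      · exact Or.inl (mem_insert_self _ _)
      · exact Or.inr ⟨u, mem_insert_self _ _, huv⟩
    · calc (insert u A).card + 1 ≤ A.card + 1 + 1 :=
            Nat.add_le_add_right (Finset.card_insert_le _ _) 1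
        _ ≤ A.card + B.card := by omega
        _ ≤ T.card := hcard
  · obtain ⟨j0, hB1⟩ := Finset.card_eq_one.mp
      (le_antisymm (by omega) (Finset.one_le_card.mpr hBne))
    have hmemB1 : ∀ j : Fin 3, j ∈ B ↔ j = j0 := by
      intro j; rw [hB1]; exact Finset.mem_singleton
    have hfin : A.card + 1 ≤ T.card := by
      have : B.card = 1 := by rw [hB1]; simp
      omega
    have h3 : j0 = 0 ∨ j0 = 1 ∨ j0 = 2 := by fin_cases j0 <;> simp
    rcases h3 with rfl | rfl | rfl
    · have hvA : v ∈ A := by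
        rcases hT (Sum.inr 2) with h | ⟨t, ht, hadj⟩
        · exact absurd ((hmemB 2).mpr h) (by rw [hmemB1]; decide)
        · rcases t with a | j
          · rw [adj_lr] at hadj
            rcases hadj with ⟨_, h⟩ | ⟨rfl, _⟩
            · exact absurd h (by decide)
            · exact (hmemA a).mpr ht
          · rw [adj_rr] at hadj
            rcases hadj with ⟨rfl, h⟩ | ⟨rfl, h⟩ | ⟨rfl, h⟩ | ⟨rfl, h⟩
            · exact absurd h (by decide)
            · exact absurd ((hmemB1 1).mp ((hmemB 1).mpr ht)) (by decide)
            · exact absurd h (by decide)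
            · exact absurd h (by decide)
      refine ⟨A, ?_, hfin⟩
      intro x
      rcases key x with hx | ⟨s, hs, hsx⟩ | ⟨j, hj, ⟨rfl, _⟩ | ⟨rfl, hj2⟩⟩
      · exact Or.inl hx
      · exact Or.inr ⟨s, hs, hsx⟩
      · exact Or.inr ⟨v, hvA, huv.symm⟩
      · exact absurd ((hmemB1 j).mp hj ▸ hj2) (by decide)
    · refine ⟨A, ?_, hfin⟩
      intro x
      rcases key x with hx | ⟨s, hs, hsx⟩ | ⟨j, hj, ⟨rfl, hj2⟩ | ⟨rfl, hj2⟩⟩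
      · exact Or.inl hx
      · exact Or.inr ⟨s, hs, hsx⟩
      · exact absurd ((hmemB1 j).mp hj ▸ hj2) (by decide)
      · exact absurd ((hmemB1 j).mp hj ▸ hj2) (by decide)
    · have huA : u ∈ A := by
        rcases hT (Sum.inr 0) with h | ⟨t, ht, hadj⟩
        · exact absurd ((hmemB 0).mpr h) (by rw [hmemB1]; decide)
        · rcases t with a | j
          · rw [adj_lr] at hadj
            rcases hadj with ⟨rfl, _⟩ | ⟨_, h⟩
            · exact (hmemA a).mpr ht
            · exact absurd h (by decide)
          · rw [adj_rr] at hadj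
            rcases hadj with ⟨rfl, h⟩ | ⟨rfl, h⟩ | ⟨rfl, h⟩ | ⟨rfl, h⟩
            · exact absurd h (by decide)
            · exact absurd h (by decide)
            · exact absurd ((hmemB1 1).mp ((hmemB 1).mpr ht)) (by decide)
            · exact absurd h (by decide)
      refine ⟨A, ?_, hfin⟩
      intro x
      rcases key x with hx | ⟨s, hs, hsx⟩ | ⟨j, hj, ⟨rfl, hj2⟩ | ⟨rfl, _⟩⟩
      · exact Or.inl hx
      · exact Or.inr ⟨s, hs, hsx⟩
      · exact absurd ((hmemB1 j).mp hj ▸ hj2) (by decide)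
      · exact Or.inr ⟨u, huA, huv⟩

end Aux

/-- If `H` is the `3`-subdivision of an edge `uv` of `G`, then `γ(H) = γ(G) + 1`. -/
theorem stmt6 {V : Type*} [Fintype V] [DecidableEq V] (G : SimpleGraph V)
    (u v : V) (huv : G.Adj u v) :
    domNum (subdiv3 G u v) = domNum G + 1 := by
  classical
  apply le_antisymm
  · obtain ⟨S, hS, hScard⟩ := domNum_exists' G
    obtain ⟨i, hA, hB, hC, hD⟩ : ∃ i : Fin 3, (u ∈ S → v ∉ S → i = 2) ∧
        (v ∈ S → u ∉ S → i = 0) ∧ (u ∉ S → i = 0 ∨ i = 1) ∧ (v ∉ S → i = 2 ∨ i = 1) := by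
      by_cases hu : u ∈ S <;> by_cases hv : v ∈ S
      · exact ⟨1, fun _ h => absurd hv h, fun _ h => absurd hu h,
          fun h => absurd hu h, fun h => absurd hv h⟩
      · exact ⟨2, fun _ _ => rfl, fun h _ => absurd h hv,
          fun h => absurd hu h, fun _ => Or.inl rfl⟩
      · exact ⟨0, fun h _ => absurd h hu, fun _ _ => rfl,
          fun _ => Or.inl rfl, fun h => absurd hv h⟩
      · exact ⟨1, fun h _ => absurd h hu, fun h _ => absurd h hv,
          fun _ => Or.inr rfl, fun _ => Or.inr rfl⟩
    have hd := upper_dom S hS i hA hB hC hD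
    have h1 := domNum_le' _ hd
    have hcard : (insert (Sum.inr i : V ⊕ Fin 3) (S.image (Sum.inl : V → V ⊕ Fin 3))).card ≤ S.card + 1 := by
      refine (Finset.card_insert_le _ _).trans ?_
      rw [Finset.card_image_of_injective _ Sum.inl_injective]
    calc domNum (subdiv3 G u v) ≤ (insert (Sum.inr i : V ⊕ Fin 3) (S.image (Sum.inl : V → V ⊕ Fin 3))).card := h1
      _ ≤ S.card + 1 := hcard
      _ = domNum G + 1 := by rw [hScard]
  · obtain ⟨T, hT, hTcard⟩ := domNum_exists' (subdiv3 G u v)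
    obtain ⟨S, hSdom, hSc⟩ := lower_bound huv T hT
    calc domNum G + 1 ≤ S.card + 1 := Nat.add_le_add_right (domNum_le' G hSdom) 1
      _ ≤ T.card := hSc
      _ = _ := hTcard
end
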